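/- Let A(x) = (12(l²−1)x − 6(l²−2l−1))/(l²+4l+1) for a fixed l > 0. Then for every convex function g : [0,1] → ℝ, ∫₀¹ (1+(l−1)x)·A(x)·g(x) dx ≤ g(0) + l·g(1). -/

import Mathlib

open intervalIntegral Set Filter MeasureTheory Topology

noncomputable def trapP (l x : ℝ) : ℝ :=
  ((l^3-l^2-l+1)*x^4 + (-l^3+5*l^2-l-3)*x^3 + (-3*l^2+6*l+3)*x^2 + (-(l^2+4*l+1))*x)
    / (l^2+4*l+1)

noncomputable def trapP1 (l x : ℝ) : ℝ :=
  (4*(l^3-l^2-l+1)*x^3 + 3*(-l^3+5*l^2-l-3)*x^2 + 2*(-3*l^2+6*l+3)*x + (-(l^2+4*l+1)))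
    / (l^2+4*l+1)

noncomputable def trapW (l x : ℝ) : ℝ :=
  (1+(l-1)*x) * ((12*(l^2-1)*x - 6*(l^2-2*l-1)) / (l^2+4*l+1))

lemma trapD_pos {l : ℝ} (hl : 0 < l) : 0 < l^2+4*l+1 := by nlinarith

lemma trapP_cont (l : ℝ) : Continuous (trapP l) := by
  unfold trapP; fun_prop

lemma trapP1_cont (l : ℝ) : Continuous (trapP1 l) := by
  unfold trapP1; fun_prop

lemma trapW_cont (l : ℝ) : Continuous (trapW l) := by
  unfold trapW; fun_prop

lemma hasDerivAt_poly4 (c4 c3 c2 c1 x : ℝ) :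
    HasDerivAt (fun x : ℝ => c4*x^4+c3*x^3+c2*x^2+c1*x)
      (4*c4*x^3+3*c3*x^2+2*c2*x+c1) x := by
  have h := ((((hasDerivAt_pow 4 x).const_mul c4).add
    ((hasDerivAt_pow 3 x).const_mul c3)).add
    ((hasDerivAt_pow 2 x).const_mul c2)).add ((hasDerivAt_id x).const_mul c1)
  refine h.congr_deriv ?_
  push_cast; ring

lemma hasDerivAt_poly3 (c3 c2 c1 c0 x : ℝ) :
    HasDerivAt (fun x : ℝ => c3*x^3+c2*x^2+c1*x+c0)
      (3*c3*x^2+2*c2*x+c1) x := by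
  have h := ((((hasDerivAt_pow 3 x).const_mul c3).add
    ((hasDerivAt_pow 2 x).const_mul c2)).add ((hasDerivAt_id x).const_mul c1)).add_const c0
  refine h.congr_deriv ?_
  push_cast; ring

lemma trapP_hasDeriv (l x : ℝ) : HasDerivAt (trapP l) (trapP1 l x) x := by
  unfold trapP trapP1
  exact (hasDerivAt_poly4 (l^3-l^2-l+1) (-l^3+5*l^2-l-3) (-3*l^2+6*l+3) (-(l^2+4*l+1)) x).div_const _

lemma trapP1_hasDeriv {l : ℝ} (hl : 0 < l) (x : ℝ) : HasDerivAt (trapP1 l) (trapW l x) x := by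
  have h := (hasDerivAt_poly3 (4*(l^3-l^2-l+1)) (3*(-l^3+5*l^2-l-3)) (2*(-3*l^2+6*l+3))
    (-(l^2+4*l+1)) x).div_const (l^2+4*l+1)
  have hD := (trapD_pos hl).ne'
  refine h.congr_deriv ?_
  unfold trapW
  field_simp
  ring

lemma trapP1_zero {l : ℝ} (hl : 0 < l) : trapP1 l 0 = -1 := by
  have hD := (trapD_pos hl).ne'
  unfold trapP1
  field_simp
  ring

lemma trapP1_one {l : ℝ} (hl : 0 < l) : trapP1 l 1 = l := by
  have hD := (trapD_pos hl).ne'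
  rw [trapP1, div_eq_iff hD]; ring

lemma trapP_zero (l : ℝ) : trapP l 0 = 0 := by
  simp [trapP]

lemma trapP_one {l : ℝ} (hl : 0 < l) : trapP l 1 = 0 := by
  have hD := (trapD_pos hl).ne'
  rw [trapP, div_eq_iff hD]; ring

lemma trapP_nonpos {l : ℝ} (hl : 0 < l) {x : ℝ} (hx : x ∈ Icc (0:ℝ) 1) :
    trapP l x ≤ 0 := by
  have hD := trapD_pos hl
  have h0 : 0 ≤ x*(1-x)*(((l^2-1)*x+2*l+1)^2 + l*(l^2+l+1)) := by
    have h1 : 0 ≤ x*(1-x) := mul_nonneg hx.1 (by linarith [hx.2])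
    have h2 : 0 ≤ ((l^2-1)*x+2*l+1)^2 + l*(l^2+l+1) := by positivity
    exact mul_nonneg h1 h2
  have hnum : (l^3-l^2-l+1)*x^4 + (-l^3+5*l^2-l-3)*x^3 + (-3*l^2+6*l+3)*x^2
      + (-(l^2+4*l+1))*x ≤ 0 := by nlinarith [h0, hl]
  rw [trapP]
  exact div_nonpos_iff.2 (Or.inr ⟨hnum, hD.le⟩)

lemma trapU_pos {l : ℝ} (hl : 0 < l) {z : ℝ} (hz : z ∈ Icc (0:ℝ) 1) :
    0 < 1+(l-1)*z := by
  rcases hz with ⟨h0, h1⟩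
  rcases le_or_gt l 1 with hc | hc
  · nlinarith [mul_nonneg (show (0:ℝ) ≤ 1-l by linarith) (show (0:ℝ) ≤ 1-z by linarith)]
  · nlinarith [mul_nonneg (show (0:ℝ) ≤ l-1 by linarith) h0]

lemma trapP1_monoOn {l : ℝ} (hl : 0 < l) {s t : ℝ} (hsub : Icc s t ⊆ Icc (0:ℝ) 1)
    (hq : ∀ z ∈ Icc s t, 0 ≤ 12*(l^2-1)*z - 6*(l^2-2*l-1)) :
    MonotoneOn (trapP1 l) (Icc s t) := by
  have hD := trapD_pos hl
  apply monotoneOn_of_deriv_nonneg (convex_Icc s t) (trapP1_cont l).continuousOn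
    (fun x _ => ((trapP1_hasDeriv hl x).differentiableAt).differentiableWithinAt)
  intro z hz
  rw [interior_Icc] at hz
  have hz' : z ∈ Icc s t := ⟨hz.1.le, hz.2.le⟩
  rw [(trapP1_hasDeriv hl z).deriv, trapW]
  exact mul_nonneg (trapU_pos hl (hsub hz')).le (div_nonneg (hq z hz') hD.le)

lemma trapP1_antiOn {l : ℝ} (hl : 0 < l) {s t : ℝ} (hsub : Icc s t ⊆ Icc (0:ℝ) 1)
    (hq : ∀ z ∈ Icc s t, 12*(l^2-1)*z - 6*(l^2-2*l-1) ≤ 0) :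
    AntitoneOn (trapP1 l) (Icc s t) := by
  have hD := trapD_pos hl
  apply antitoneOn_of_deriv_nonpos (convex_Icc s t) (trapP1_cont l).continuousOn
    (fun x _ => ((trapP1_hasDeriv hl x).differentiableAt).differentiableWithinAt)
  intro z hz
  rw [interior_Icc] at hz
  have hz' : z ∈ Icc s t := ⟨hz.1.le, hz.2.le⟩
  rw [(trapP1_hasDeriv hl z).deriv, trapW]
  exact mul_nonpos_of_nonneg_of_nonpos (trapU_pos hl (hsub hz')).le
    (div_nonpos_iff.2 (Or.inr ⟨hq z hz', hD.le⟩))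

lemma trapP1_upclosed {l : ℝ} (hl : 0 < l) {x y : ℝ} (hx : x ∈ Icc (0:ℝ) 1)
    (hy : y ∈ Icc (0:ℝ) 1) (hxy : x ≤ y) (h : 0 ≤ trapP1 l x) : 0 ≤ trapP1 l y := by
  by_cases hcase : 1 ≤ l
  · -- q is nondecreasing
    have hqx : 0 < 12*(l^2-1)*x - 6*(l^2-2*l-1) := by
      by_contra hq
      push_neg at hq
      have anti : AntitoneOn (trapP1 l) (Icc 0 x) := by
        apply trapP1_antiOn hl (Icc_subset_Icc le_rfl hx.2)
        intro z hz
        nlinarith [mul_nonneg (show (0:ℝ) ≤ l^2-1 by nlinarith)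
          (show (0:ℝ) ≤ x - z by linarith [hz.2]), hq]
      have h0x : trapP1 l x ≤ trapP1 l 0 :=
        anti ⟨le_rfl, hx.1⟩ ⟨hx.1, le_rfl⟩ hx.1
      rw [trapP1_zero hl] at h0x
      linarith
    have mono : MonotoneOn (trapP1 l) (Icc x y) := by
      apply trapP1_monoOn hl (Icc_subset_Icc hx.1 hy.2)
      intro z hz
      nlinarith [mul_nonneg (show (0:ℝ) ≤ l^2-1 by nlinarith)
        (show (0:ℝ) ≤ z - x by linarith [hz.1]), hqx]
    exact h.trans (mono ⟨le_rfl, hxy⟩ ⟨hxy, le_rfl⟩ hxy)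
  · push_neg at hcase
    by_cases hqy : 0 ≤ 12*(l^2-1)*y - 6*(l^2-2*l-1)
    · have mono : MonotoneOn (trapP1 l) (Icc x y) := by
        apply trapP1_monoOn hl (Icc_subset_Icc hx.1 hy.2)
        intro z hz
        nlinarith [mul_nonneg (show (0:ℝ) ≤ 1-l^2 by nlinarith)
          (show (0:ℝ) ≤ y - z by linarith [hz.2]), hqy]
      exact h.trans (mono ⟨le_rfl, hxy⟩ ⟨hxy, le_rfl⟩ hxy)
    · push_neg at hqy
      have anti : AntitoneOn (trapP1 l) (Icc y 1) := by
        apply trapP1_antiOn hl (Icc_subset_Icc hy.1 le_rfl)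
        intro z hz
        nlinarith [mul_nonneg (show (0:ℝ) ≤ 1-l^2 by nlinarith)
          (show (0:ℝ) ≤ z - y by linarith [hz.1]), hqy]
      have h1y : trapP1 l 1 ≤ trapP1 l y :=
        anti ⟨le_rfl, hy.2⟩ ⟨hy.2, le_rfl⟩ hy.2
      rw [trapP1_one hl] at h1y
      linarith
theorem trapezium_one_dim_estimate
    (l : ℝ) (hl : 0 < l)
    (A : ℝ → ℝ)
    (hA : ∀ x, A x = (12 * (l ^ 2 - 1) * x - 6 * (l ^ 2 - 2 * l - 1)) / (l ^ 2 + 4 * l + 1))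
    (g : ℝ → ℝ) (hgconv : ConvexOn ℝ (Set.Icc 0 1) g)
    (hgcont : ContinuousOn g (Set.Icc 0 1)) :
    ∫ x in (0:ℝ)..1, (1 + (l - 1) * x) * A x * g x ≤ g 0 + l * g 1 := by
  have hD := trapD_pos hl
  have hgoal_eq : (∫ x in (0:ℝ)..1, (1 + (l - 1) * x) * A x * g x)
      = ∫ x in (0:ℝ)..1, trapW l x * g x := by
    apply integral_congr
    intro x _
    show (1 + (l - 1) * x) * A x * g x = trapW l x * g x
    rw [hA x]
    simp only [trapW]
  rw [hgoal_eq]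
  -- one-sided derivative of g
  have hslope : ∀ t ∈ Ioo (0:ℝ) 1, MonotoneOn (slope g t) (Icc 0 1 \ {t}) :=
    fun t ht => hgconv.slope_mono ⟨ht.1.le, ht.2.le⟩
  have hsub : ∀ t ∈ Ioo (0:ℝ) 1, Ioo t 1 ⊆ Icc 0 1 \ {t} :=
    fun t ht u hu => ⟨⟨ht.1.le.trans hu.1.le, hu.2.le⟩, hu.1.ne'⟩
  have hbdd : ∀ t ∈ Ioo (0:ℝ) 1, BddBelow (slope g t '' Ioo t 1) := by
    intro t ht
    refine ⟨slope g t 0, ?_⟩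
    rintro v ⟨u, hu, rfl⟩
    exact hslope t ht ⟨⟨le_rfl, zero_le_one⟩, ht.1.ne⟩ (hsub t ht hu) (ht.1.trans hu.1).le
  set φ : ℝ → ℝ := fun t => sInf (slope g t '' Ioo t 1) with hφdef
  have hφd : ∀ t ∈ Ioo (0:ℝ) 1, HasDerivWithinAt g (φ t) (Ioi t) t := by
    intro t ht
    rw [hasDerivWithinAt_iff_tendsto_slope' notMem_Ioi_self]
    exact MonotoneOn.tendsto_nhdsWithin_Ioo_right (nonempty_Ioo.2 ht.2)
      ((hslope t ht).mono (hsub t ht)) (hbdd t ht)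
  have hφmono : MonotoneOn φ (Ioo (0:ℝ) 1) := by
    intro s hs t ht hst
    rcases eq_or_lt_of_le hst with rfl | hst'
    · exact le_rfl
    have h1 : φ s ≤ slope g s t := csInf_le (hbdd s hs) ⟨t, ⟨hst', ht.2⟩, rfl⟩
    have h2 : slope g s t ≤ φ t := by
      apply le_csInf ((nonempty_Ioo.2 ht.2).image _)
      rintro v ⟨u, hu, rfl⟩
      rw [slope_comm]
      exact hslope t ht ⟨⟨hs.1.le, hs.2.le⟩, hst'.ne⟩ (hsub t ht hu) (hst'.le.trans hu.1.le)
    linarith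
  have hφint : ∀ a b : ℝ, 0 < a → a ≤ b → b < 1 → IntervalIntegrable φ volume a b := by
    intro a b ha hab hb
    apply MonotoneOn.intervalIntegrable
    rw [uIcc_of_le hab]
    exact hφmono.mono (fun x hx => ⟨ha.trans_le hx.1, hx.2.trans_lt hb⟩)
  have hgFTC : ∀ a b : ℝ, 0 < a → a ≤ b → b < 1 → ∫ t in a..b, φ t = g b - g a := by
    intro a b ha hab hb
    exact integral_eq_sub_of_hasDeriv_right_of_le hab
      (hgcont.mono (Icc_subset_Icc ha.le hb.le))
      (fun x hx => hφd x ⟨ha.trans hx.1, hx.2.trans hb⟩) (hφint a b ha hab hb)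
  -- the crossing point c of trapP1
  set S : Set ℝ := Icc (0:ℝ) 1 ∩ (trapP1 l)⁻¹' (Ici 0) with hSdef
  have hS1 : (1:ℝ) ∈ S :=
    ⟨⟨zero_le_one, le_rfl⟩, by simp only [mem_preimage, mem_Ici, trapP1_one hl]; exact hl.le⟩
  have hSbdd : BddBelow S := ⟨0, fun x hx => hx.1.1⟩
  have hSclosed : IsClosed S := isClosed_Icc.inter (isClosed_Ici.preimage (trapP1_cont l))
  set c : ℝ := sInf S with hcdef
  have hcS : c ∈ S := hSclosed.csInf_mem ⟨1, hS1⟩ hSbdd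
  have hcP1 : 0 ≤ trapP1 l c := hcS.2
  have hc0 : 0 < c := by
    rcases hcS.1.1.lt_or_eq with h | h
    · exact h
    · exfalso
      have h2 := hcP1
      rw [← h, trapP1_zero hl] at h2
      linarith
  have hc1 : c < 1 := by
    have hpos1 : (0:ℝ) < trapP1 l 1 := by rw [trapP1_one hl]; exact hl
    have hev : ∀ᶠ x in 𝓝 (1:ℝ), 0 < trapP1 l x :=
      ((trapP1_cont l).continuousAt).eventually_mem (Ioi_mem_nhds hpos1) |>.mono (fun x hx => hx)
    have hev2 : ∀ᶠ x in 𝓝[<] (1:ℝ), 0 < trapP1 l x := hev.filter_mono nhdsWithin_le_nhds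
    have hmem : ∀ᶠ x in 𝓝[<] (1:ℝ), x ∈ Ioo (0:ℝ) 1 :=
      eventually_of_mem (Ioo_mem_nhdsLT zero_lt_one) (fun x hx => hx)
    obtain ⟨x, hx1, hx2⟩ := (hev2.and hmem).exists
    exact lt_of_le_of_lt (csInf_le hSbdd ⟨⟨hx2.1.le, hx2.2.le⟩, hx1.le⟩) hx2.2
  have hcIoo : c ∈ Ioo (0:ℝ) 1 := ⟨hc0, hc1⟩
  have hPneg : ∀ x : ℝ, 0 ≤ x → x < c → trapP1 l x ≤ 0 := by
    intro x h0 hxc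
    by_contra h
    push_neg at h
    have hxS : x ∈ S := ⟨⟨h0, (hxc.trans hc1).le⟩, h.le⟩
    exact absurd (csInf_le hSbdd hxS) (not_le.2 hxc)
  have hPpos : ∀ x : ℝ, c ≤ x → x ≤ 1 → 0 ≤ trapP1 l x := fun x hcx hx1 =>
    trapP1_upclosed hl ⟨hc0.le, hc1.le⟩ ⟨hc0.le.trans hcx, hx1⟩ hcx hcP1
  -- FTC for the polynomial -trapP
  have hPint : ∀ u v : ℝ, ∫ x in u..v, -(trapP1 l x) = trapP l u - trapP l v := by
    intro u v
    have h := integral_eq_sub_of_hasDerivAt (f := fun x => -(trapP l x))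
      (f' := fun x => -(trapP1 l x)) (a := u) (b := v)
      (fun x _ => (trapP_hasDeriv l x).neg)
      (((trapP1_cont l).neg).intervalIntegrable u v)
    rw [h]; ring
  -- key inequality on interior intervals
  have key : ∀ a b : ℝ, 0 < a → a ≤ c → c ≤ b → b < 1 →
      ∫ x in a..b, trapW l x * g x ≤
        (l - trapP1 l a) * g a - (l - trapP1 l b) * g b + l * (g b - g a)
          + φ c * (trapP l a - trapP l b) := by
    intro a b ha hac hcb hb
    have hab : a ≤ b := hac.trans hcb
    have hIab : Icc a b ⊆ Icc (0:ℝ) 1 := Icc_subset_Icc ha.le hb.le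
    have huIab : uIcc a b ⊆ Icc (0:ℝ) 1 := by rw [uIcc_of_le hab]; exact hIab
    have hwg_cont : ContinuousOn (fun x => trapW l x * g x) (Icc 0 1) :=
      (trapW_cont l).continuousOn.mul hgcont
    have hwg_int : IntervalIntegrable (fun x => trapW l x * g x) volume a b :=
      (hwg_cont.mono huIab).intervalIntegrable
    have hnegwg_int : IntervalIntegrable (fun x => -(trapW l x) * g x) volume a b := by
      have : (fun x => -(trapW l x) * g x) = fun x => -(trapW l x * g x) := by
        funext x; ring
      rw [this]
      exact hwg_int.neg
    have hφint_ab := hφint a b ha hab hb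
    have hVφ_int : IntervalIntegrable (fun x => (l - trapP1 l x) * φ x) volume a b :=
      hφint_ab.continuousOn_mul ((continuous_const.sub (trapP1_cont l)).continuousOn)
    have hVg : ∫ x in a..b, (-(trapW l x) * g x + (l - trapP1 l x) * φ x)
        = (l - trapP1 l b) * g b - (l - trapP1 l a) * g a := by
      apply integral_eq_sub_of_hasDeriv_right_of_le hab
      · exact (continuous_const.sub (trapP1_cont l)).continuousOn.mul (hgcont.mono hIab)
      · intro x hx
        have hx' : x ∈ Ioo (0:ℝ) 1 := ⟨ha.trans hx.1, hx.2.trans hb⟩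
        exact (((trapP1_hasDeriv hl x).const_sub l).hasDerivWithinAt).mul (hφd x hx')
      · exact hnegwg_int.add hVφ_int
    have hsplit : ∫ x in a..b, (-(trapW l x) * g x + (l - trapP1 l x) * φ x)
        = (∫ x in a..b, -(trapW l x) * g x) + ∫ x in a..b, (l - trapP1 l x) * φ x :=
      integral_add hnegwg_int hVφ_int
    have hneg : ∫ x in a..b, -(trapW l x) * g x = - ∫ x in a..b, trapW l x * g x := by
      rw [← intervalIntegral.integral_neg]
      congr 1
      funext x; ring
    -- estimate for the (V - l) φ part
    have hφint_ac := hφint a c ha hac hc1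
    have hφint_cb := hφint c b hc0 hcb hb
    have hP1φ_int_ac : IntervalIntegrable (fun x => -(trapP1 l x) * φ x) volume a c :=
      hφint_ac.continuousOn_mul ((trapP1_cont l).neg.continuousOn)
    have hP1φ_int_cb : IntervalIntegrable (fun x => -(trapP1 l x) * φ x) volume c b :=
      hφint_cb.continuousOn_mul ((trapP1_cont l).neg.continuousOn)
    have hmono_ac : ∫ x in a..c, -(trapP1 l x) * φ x ≤ ∫ x in a..c, -(trapP1 l x) * φ c := by
      apply integral_mono_on hac hP1φ_int_ac
        (((trapP1_cont l).neg.mul continuous_const).intervalIntegrable a c)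
      intro x hx
      rcases eq_or_lt_of_le hx.2 with heq | hlt
      · rw [heq]; exact le_rfl
      · have hφxc : φ x ≤ φ c := hφmono ⟨ha.trans_le hx.1, hlt.trans hc1⟩ hcIoo hlt.le
        exact mul_le_mul_of_nonneg_left hφxc
          (neg_nonneg.2 (hPneg x (ha.le.trans hx.1) hlt))
    have hmono_cb : ∫ x in c..b, -(trapP1 l x) * φ x ≤ ∫ x in c..b, -(trapP1 l x) * φ c := by
      apply integral_mono_on hcb hP1φ_int_cb
        (((trapP1_cont l).neg.mul continuous_const).intervalIntegrable c b)
      intro x hx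
      rcases eq_or_lt_of_le hx.1 with heq | hlt
      · rw [← heq]; exact le_rfl
      · have hφcx : φ c ≤ φ x := hφmono hcIoo ⟨hc0.trans hlt, hx.2.trans_lt hb⟩ hlt.le
        exact mul_le_mul_of_nonpos_left hφcx
          (neg_nonpos.2 (hPpos x hx.1 (hx.2.trans hb.le)))
    have heq_ac : ∫ x in a..c, -(trapP1 l x) * φ c = (trapP l a - trapP l c) * φ c := by
      rw [intervalIntegral.integral_mul_const, hPint a c]
    have heq_cb : ∫ x in c..b, -(trapP1 l x) * φ c = (trapP l c - trapP l b) * φ c := by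
      rw [intervalIntegral.integral_mul_const, hPint c b]
    have hadj : (∫ x in a..c, -(trapP1 l x) * φ x) + (∫ x in c..b, -(trapP1 l x) * φ x)
        = ∫ x in a..b, -(trapP1 l x) * φ x :=
      integral_add_adjacent_intervals hP1φ_int_ac hP1φ_int_cb
    have hP1φ_int_ab : IntervalIntegrable (fun x => -(trapP1 l x) * φ x) volume a b :=
      hφint_ab.continuousOn_mul ((trapP1_cont l).neg.continuousOn)
    have hVφ_split : ∫ x in a..b, (l - trapP1 l x) * φ x
        = (∫ x in a..b, l * φ x) + ∫ x in a..b, -(trapP1 l x) * φ x := by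
      rw [← integral_add (hφint_ab.const_mul l) hP1φ_int_ab]
      congr 1
      funext x; ring
    have hlφ : ∫ x in a..b, l * φ x = l * (g b - g a) := by
      rw [intervalIntegral.integral_const_mul, hgFTC a b ha hab hb]
    linarith
  -- sequences approaching the endpoints
  have hinv_pos : ∀ n : ℕ, 0 < ((n:ℝ)+2)⁻¹ := fun n => by positivity
  have hinv_le : ∀ n : ℕ, ((n:ℝ)+2)⁻¹ ≤ 1 := by
    intro n
    rw [inv_le_one_iff₀]
    right
    have : (0:ℝ) ≤ (n:ℝ) := Nat.cast_nonneg n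
    linarith
  set aa : ℕ → ℝ := fun n => c * ((n:ℝ)+2)⁻¹ with haa
  set bb : ℕ → ℝ := fun n => 1 - (1-c) * ((n:ℝ)+2)⁻¹ with hbb
  have haa_pos : ∀ n, 0 < aa n := fun n => mul_pos hc0 (hinv_pos n)
  have haa_le : ∀ n, aa n ≤ c := by
    intro n
    have h1 := hinv_le n
    have h2 := (hinv_pos n).le
    simp only [haa]
    nlinarith
  have hbb_ge : ∀ n, c ≤ bb n := by
    intro n
    have h1 := hinv_le n
    have h2 := (hinv_pos n).le
    simp only [hbb]
    nlinarith [mul_nonneg (show (0:ℝ) ≤ 1 - c by linarith) (show (0:ℝ) ≤ 1 - ((n:ℝ)+2)⁻¹ by linarith)]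
  have hbb_lt : ∀ n, bb n < 1 := by
    intro n
    have h2 := hinv_pos n
    simp only [hbb]
    nlinarith [mul_pos (show (0:ℝ) < 1 - c by linarith) h2]
  have htend_inv : Tendsto (fun n : ℕ => ((n:ℝ)+2)⁻¹) atTop (𝓝 0) := by
    apply tendsto_inv_atTop_zero.comp
    exact tendsto_atTop_add_const_right atTop 2 tendsto_natCast_atTop_atTop
  have haa_tend : Tendsto aa atTop (𝓝 0) := by
    have := htend_inv.const_mul c
    simpa using this
  have hbb_tend : Tendsto bb atTop (𝓝 1) := by
    have h : Tendsto (fun n : ℕ => 1 - (1-c) * ((n:ℝ)+2)⁻¹) atTop (𝓝 (1 - (1-c) * 0)) :=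
      (tendsto_const_nhds (x := (1:ℝ))).sub (htend_inv.const_mul (1-c))
    simpa using h
  -- limits of g along the sequences
  have haa_mem : ∀ n, aa n ∈ Icc (0:ℝ) 1 :=
    fun n => ⟨(haa_pos n).le, (haa_le n).trans hc1.le⟩
  have hbb_mem : ∀ n, bb n ∈ Icc (0:ℝ) 1 :=
    fun n => ⟨hc0.le.trans (hbb_ge n), (hbb_lt n).le⟩
  have hg0 : Tendsto (fun n => g (aa n)) atTop (𝓝 (g 0)) := by
    apply (hgcont 0 ⟨le_rfl, zero_le_one⟩).tendsto.comp
    rw [tendsto_nhdsWithin_iff]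
    exact ⟨haa_tend, Eventually.of_forall haa_mem⟩
  have hg1 : Tendsto (fun n => g (bb n)) atTop (𝓝 (g 1)) := by
    apply (hgcont 1 ⟨zero_le_one, le_rfl⟩).tendsto.comp
    rw [tendsto_nhdsWithin_iff]
    exact ⟨hbb_tend, Eventually.of_forall hbb_mem⟩
  -- limit of the right-hand side
  have hP1a : Tendsto (fun n => trapP1 l (aa n)) atTop (𝓝 (trapP1 l 0)) :=
    ((trapP1_cont l).tendsto 0).comp haa_tend
  have hP1b : Tendsto (fun n => trapP1 l (bb n)) atTop (𝓝 (trapP1 l 1)) :=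
    ((trapP1_cont l).tendsto 1).comp hbb_tend
  have hPa : Tendsto (fun n => trapP l (aa n)) atTop (𝓝 (trapP l 0)) :=
    ((trapP_cont l).tendsto 0).comp haa_tend
  have hPb : Tendsto (fun n => trapP l (bb n)) atTop (𝓝 (trapP l 1)) :=
    ((trapP_cont l).tendsto 1).comp hbb_tend
  have hRHS_tend : Tendsto (fun n => (l - trapP1 l (aa n)) * g (aa n)
      - (l - trapP1 l (bb n)) * g (bb n) + l * (g (bb n) - g (aa n))
      + φ c * (trapP l (aa n) - trapP l (bb n))) atTop (𝓝 (g 0 + l * g 1)) := by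
    have h : Tendsto (fun n => (l - trapP1 l (aa n)) * g (aa n)
        - (l - trapP1 l (bb n)) * g (bb n) + l * (g (bb n) - g (aa n))
        + φ c * (trapP l (aa n) - trapP l (bb n))) atTop
        (𝓝 ((l - trapP1 l 0) * g 0 - (l - trapP1 l 1) * g 1 + l * (g 1 - g 0)
          + φ c * (trapP l 0 - trapP l 1))) :=
      ((((tendsto_const_nhds.sub hP1a).mul hg0).sub
        ((tendsto_const_nhds.sub hP1b).mul hg1)).add
        (tendsto_const_nhds.mul (hg1.sub hg0))).add
        (tendsto_const_nhds.mul (hPa.sub hPb))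
    have hval : (l - trapP1 l 0) * g 0 - (l - trapP1 l 1) * g 1 + l * (g 1 - g 0)
        + φ c * (trapP l 0 - trapP l 1) = g 0 + l * g 1 := by
      rw [trapP1_zero hl, trapP1_one hl, trapP_zero, trapP_one hl]
      ring
    rw [← hval]
    exact h
  -- limit of the left-hand side
  have hwg_cont : ContinuousOn (fun x => trapW l x * g x) (Icc 0 1) :=
    (trapW_cont l).continuousOn.mul hgcont
  have hint01 : IntervalIntegrable (fun x => trapW l x * g x) volume 0 1 := by
    apply ContinuousOn.intervalIntegrable
    rw [uIcc_of_le (zero_le_one : (0:ℝ) ≤ 1)]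
    exact hwg_cont
  obtain ⟨M, hM⟩ := isCompact_Icc.exists_bound_of_continuousOn hwg_cont
  have htail1 : Tendsto (fun n => ∫ x in (0:ℝ)..(aa n), trapW l x * g x) atTop (𝓝 0) := by
    apply squeeze_zero_norm (a := fun n => M * aa n)
    · intro n
      have hb := norm_integral_le_of_norm_le_const (C := M) (a := (0:ℝ)) (b := aa n)
        (f := fun x => trapW l x * g x) ?_
      · rw [sub_zero, abs_of_nonneg (haa_pos n).le] at hb
        exact hb
      · intro x hx
        rw [uIoc_of_le (haa_pos n).le] at hx
        exact hM x ⟨hx.1.le, hx.2.trans (haa_mem n).2⟩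
    · simpa using haa_tend.const_mul M
  have htail2 : Tendsto (fun n => ∫ x in (bb n)..1, trapW l x * g x) atTop (𝓝 0) := by
    apply squeeze_zero_norm (a := fun n => M * (1 - bb n))
    · intro n
      have hb := norm_integral_le_of_norm_le_const (C := M) (a := bb n) (b := (1:ℝ))
        (f := fun x => trapW l x * g x) ?_
      · rw [abs_of_nonneg (by linarith [hbb_lt n] : (0:ℝ) ≤ 1 - bb n)] at hb
        exact hb
      · intro x hx
        rw [uIoc_of_le (hbb_lt n).le] at hx
        exact hM x ⟨(hbb_mem n).1.trans hx.1.le, hx.2⟩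
    · have h2 : Tendsto (fun n => 1 - bb n) atTop (𝓝 (1 - 1)) :=
        (tendsto_const_nhds (x := (1:ℝ))).sub hbb_tend
      have h3 := h2.const_mul M
      norm_num at h3
      simpa using h3
  have hdecomp : ∀ n, ∫ x in (aa n)..(bb n), trapW l x * g x
      = (∫ x in (0:ℝ)..1, trapW l x * g x) - (∫ x in (0:ℝ)..(aa n), trapW l x * g x)
        - (∫ x in (bb n)..1, trapW l x * g x) := by
    intro n
    have hab : aa n ≤ bb n := (haa_le n).trans (hbb_ge n)
    have h1 : IntervalIntegrable (fun x => trapW l x * g x) volume 0 (aa n) :=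
      hint01.mono_set (by
        rw [uIcc_of_le (haa_pos n).le, uIcc_of_le (zero_le_one : (0:ℝ) ≤ 1)]
        exact Icc_subset_Icc le_rfl (haa_mem n).2)
    have h2 : IntervalIntegrable (fun x => trapW l x * g x) volume (aa n) (bb n) :=
      hint01.mono_set (by
        rw [uIcc_of_le hab, uIcc_of_le (zero_le_one : (0:ℝ) ≤ 1)]
        exact Icc_subset_Icc (haa_mem n).1 (hbb_mem n).2)
    have h3 : IntervalIntegrable (fun x => trapW l x * g x) volume (bb n) 1 :=
      hint01.mono_set (by
        rw [uIcc_of_le (hbb_lt n).le, uIcc_of_le (zero_le_one : (0:ℝ) ≤ 1)]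
        exact Icc_subset_Icc (hbb_mem n).1 le_rfl)
    have e1 := integral_add_adjacent_intervals h1 h2
    have e2 := integral_add_adjacent_intervals (h1.trans h2) h3
    linarith
  have hLHS_tend : Tendsto (fun n => ∫ x in (aa n)..(bb n), trapW l x * g x) atTop
      (𝓝 (∫ x in (0:ℝ)..1, trapW l x * g x)) := by
    have heq : (fun n => ∫ x in (aa n)..(bb n), trapW l x * g x)
        = fun n => (∫ x in (0:ℝ)..1, trapW l x * g x)
          - (∫ x in (0:ℝ)..(aa n), trapW l x * g x)
          - (∫ x in (bb n)..1, trapW l x * g x) := funext hdecomp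
    rw [heq]
    have h := (tendsto_const_nhds (x := ∫ x in (0:ℝ)..1, trapW l x * g x)).sub htail1 |>.sub htail2
    simpa using h
  exact le_of_tendsto_of_tendsto' hLHS_tend hRHS_tend
    (fun n => key (aa n) (bb n) (haa_pos n) (haa_le n) (hbb_ge n) (hbb_lt n))
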